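/- Let k be a field, n ≥ 1, and V₁, …, V_{n+1} k-vector spaces. Let f be a linear functional on V₁ ⊗ ⋯ ⊗ V_{n+1}. Suppose that for every k with 1 ≤ k ≤ n, f lies in the image of the canonical map Vₖ* ⊗ (⨂_{i ≠ k} Vᵢ)* → (V₁ ⊗ ⋯ ⊗ V_{n+1})*. Then f lies in the image of the canonical map V₁* ⊗ ⋯ ⊗ V_{n+1}* → (V₁ ⊗ ⋯ ⊗ V_{n+1})*. -/

import Mathlib

open TensorProduct

noncomputable section
set_option linter.unusedSectionVars false

variable {k : Type} [Field k] {ι : Type} [Fintype ι] [DecidableEq ι]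
  {V : ι → Type} [∀ i, AddCommGroup (V i)] [∀ i, Module k (V i)]

def glueF (z : ι) (v : V z) (y : ∀ i : {i : ι // i ≠ z}, V i.1) : ∀ i, V i :=
  fun i => if h : i = z then h ▸ v else y ⟨i, h⟩

lemma glueF_z (z : ι) (v : V z) (y : ∀ i : {i : ι // i ≠ z}, V i.1) :
    glueF z v y z = v := by simp [glueF]

lemma glueF_ne (z : ι) (v : V z) (y : ∀ i : {i : ι // i ≠ z}, V i.1)
    (i : ι) (h : i ≠ z) : glueF z v y i = y ⟨i, h⟩ := by simp [glueF, h]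

lemma glueF_res (z : ι) (v : V z) (y : ∀ i : {i : ι // i ≠ z}, V i.1) :
    (fun i : {i : ι // i ≠ z} => glueF z v y i.1) = y := by
  funext i; exact glueF_ne z v y i.1 i.2

lemma glueF_update (z : ι) (v : V z) (y : ∀ i : {i : ι // i ≠ z}, V i.1)
    (c : {i : ι // i ≠ z}) (w : V c.1) :
    glueF z v (Function.update y c w) = Function.update (glueF z v y) c.1 w := by
  obtain ⟨cv, hcv⟩ := c
  funext i
  by_cases h : i = z
  · subst h
    rw [glueF_z, Function.update_of_ne (Ne.symm hcv), glueF_z]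
  · rw [glueF_ne z v _ i h]
    by_cases hc : i = cv
    · subst hc
      exact (Function.update_self (⟨i, hcv⟩ : {i : ι // i ≠ z}) w y).trans
        (Function.update_self i w _).symm
    · rw [Function.update_of_ne (fun he => hc (congrArg Subtype.val he)),
        Function.update_of_ne hc, glueF_ne z v y i h]

def glueML (z : ι) (v : V z) :
    MultilinearMap k (fun i : {i : ι // i ≠ z} => V i.1) (PiTensorProduct k V) where
  toFun y := PiTensorProduct.tprod k (glueF z v y)
  map_update_add' := fun {dec} y c a b => by
    rw [Subsingleton.elim dec (by clear dec; infer_instance)]; clear dec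
    simp only [glueF_update]
    exact MultilinearMap.map_update_add (PiTensorProduct.tprod k) _ c.1 a b
  map_update_smul' := fun {dec} y c r a => by
    rw [Subsingleton.elim dec (by clear dec; infer_instance)]; clear dec
    simp only [glueF_update]
    exact MultilinearMap.map_update_smul (PiTensorProduct.tprod k) _ c.1 r a

def glueLM (z : ι) (v : V z) :
    PiTensorProduct k (fun i : {i : ι // i ≠ z} => V i.1) →ₗ[k] PiTensorProduct k V :=
  PiTensorProduct.lift (glueML z v)

@[simp] lemma glueLM_tprod (z : ι) (v : V z) (y : ∀ i : {i : ι // i ≠ z}, V i.1) :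
    glueLM z v (PiTensorProduct.tprod k y) = PiTensorProduct.tprod k (glueF z v y) :=
  PiTensorProduct.lift.tprod y

def restr (z : ι) (v : V z) :
    Module.Dual k (PiTensorProduct k V) →ₗ[k]
      Module.Dual k (PiTensorProduct k (fun i : {i : ι // i ≠ z} => V i.1)) :=
  (glueLM z v).dualMap

@[simp] lemma restr_tprod (z : ι) (v : V z) (F : Module.Dual k (PiTensorProduct k V))
    (y : ∀ i : {i : ι // i ≠ z}, V i.1) :
    restr z v F (PiTensorProduct.tprod k y) = F (PiTensorProduct.tprod k (glueF z v y)) := by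
  simp [restr, LinearMap.dualMap_apply]

def resF (z : ι) (x : ∀ i, V i) : ∀ i : {i : ι // i ≠ z}, V i.1 := fun i => x i.1

lemma resF_update_ne (z : ι) (x : ∀ i, V i) (c : ι) (hc : c ≠ z) (w : V c) :
    resF z (Function.update x c w) = Function.update (resF z x) ⟨c, hc⟩ w := by
  funext i
  by_cases h : i.1 = c
  · obtain ⟨iv, hiv⟩ := i
    simp only at h; subst h
    exact (Function.update_self iv w x).trans
      (Function.update_self (⟨iv, hc⟩ : {i : ι // i ≠ z}) w (resF z x)).symm
  · rw [show resF z (Function.update x c w) i = Function.update x c w i.1 from rfl,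
      Function.update_of_ne h, Function.update_of_ne (fun he => h (congrArg Subtype.val he))]
    rfl

lemma resF_update_z (z : ι) (x : ∀ i, V i) (w : V z) :
    resF z (Function.update x z w) = resF z x := by
  funext i
  exact Function.update_of_ne i.2 w x

lemma resF_glueF (z : ι) (v : V z) (y : ∀ i : {i : ι // i ≠ z}, V i.1) :
    resF z (glueF z v y) = y := by
  funext i; exact glueF_ne z v y i.1 i.2

def prodML (z : ι) (ψ : Module.Dual k (V z))
    (θ : Module.Dual k (PiTensorProduct k (fun i : {i : ι // i ≠ z} => V i.1))) :
    MultilinearMap k V k where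
  toFun x := ψ (x z) * θ (PiTensorProduct.tprod k (resF z x))
  map_update_add' := fun {dec} x c a b => by
    rw [Subsingleton.elim dec (by clear dec; infer_instance)]; clear dec
    by_cases h : c = z
    · subst h
      rw [resF_update_z, resF_update_z, resF_update_z, Function.update_self,
        Function.update_self, Function.update_self, map_add, add_mul]
    · rw [resF_update_ne z x c h, resF_update_ne z x c h, resF_update_ne z x c h,
        Function.update_of_ne (fun he => h he.symm),
        Function.update_of_ne (fun he => h he.symm),
        Function.update_of_ne (fun he => h he.symm),
        MultilinearMap.map_update_add (PiTensorProduct.tprod k) (resF z x) ⟨c, h⟩ a b, map_add, mul_add]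
  map_update_smul' := fun {dec} x c r a => by
    rw [Subsingleton.elim dec (by clear dec; infer_instance)]; clear dec
    by_cases h : c = z
    · subst h
      rw [resF_update_z, resF_update_z, Function.update_self, Function.update_self,
        map_smul, smul_eq_mul, mul_assoc]
      rfl
    · rw [resF_update_ne z x c h, resF_update_ne z x c h,
        Function.update_of_ne (fun he => h he.symm),
        Function.update_of_ne (fun he => h he.symm),
        MultilinearMap.map_update_smul (PiTensorProduct.tprod k) (resF z x) ⟨c, h⟩ r a, map_smul,
        smul_eq_mul, smul_eq_mul, mul_left_comm]

def extend (z : ι) (ψ : Module.Dual k (V z)) :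
    Module.Dual k (PiTensorProduct k (fun i : {i : ι // i ≠ z} => V i.1)) →ₗ[k]
      Module.Dual k (PiTensorProduct k V) where
  toFun θ := PiTensorProduct.lift (prodML z ψ θ)
  map_add' θ θ' := by
    apply PiTensorProduct.ext
    apply MultilinearMap.ext
    intro x
    simp only [LinearMap.compMultilinearMap_apply, LinearMap.add_apply,
      PiTensorProduct.lift.tprod]
    show ψ (x z) * (θ + θ') _ = ψ (x z) * θ _ + ψ (x z) * θ' _
    rw [LinearMap.add_apply, mul_add]
  map_smul' r θ := by
    apply PiTensorProduct.ext
    apply MultilinearMap.ext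
    intro x
    simp only [LinearMap.compMultilinearMap_apply, LinearMap.smul_apply, RingHom.id_apply,
      PiTensorProduct.lift.tprod]
    show ψ (x z) * (r • θ) _ = r • (ψ (x z) * θ _)
    rw [LinearMap.smul_apply, smul_eq_mul, smul_eq_mul, mul_left_comm]

@[simp] lemma extend_tprod (z : ι) (ψ : Module.Dual k (V z))
    (θ : Module.Dual k (PiTensorProduct k (fun i : {i : ι // i ≠ z} => V i.1)))
    (x : ∀ i, V i) :
    extend z ψ θ (PiTensorProduct.tprod k x)
      = ψ (x z) * θ (PiTensorProduct.tprod k (resF z x)) :=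
  PiTensorProduct.lift.tprod x

lemma span_transfer {M N : Type} [AddCommGroup M] [Module k M] [AddCommGroup N] [Module k N]
    (Φ : M →ₗ[k] N) {S : Set M} {S' : Set N} (h : ∀ g ∈ S, Φ g ∈ Submodule.span k S')
    {f : M} (hf : f ∈ Submodule.span k S) : Φ f ∈ Submodule.span k S' := by
  have h1 : Φ f ∈ Submodule.map Φ (Submodule.span k S) := ⟨f, hf, rfl⟩
  rw [Submodule.map_span] at h1
  refine Submodule.span_le.mpr ?_ h1
  rintro g ⟨a, ha, rfl⟩
  exact h a ha

lemma exists_dual_family {M : Type} [AddCommGroup M] [Module k M] {N : ℕ}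
    {e : Fin N → Module.Dual k M} (he : LinearIndependent k e) :
    ∃ v : Fin N → M, ∀ b c, e c (v b) = if c = b then 1 else 0 := by
  let Φ : M →ₗ[k] (Fin N → k) := LinearMap.pi e
  have hsurj : Function.Surjective Φ := by
    rw [← LinearMap.range_eq_top]
    by_contra hne
    obtain ⟨g, hg0, hg⟩ := (LinearMap.range Φ).exists_dual_map_eq_bot_of_lt_top
      (lt_top_iff_ne_top.mpr hne) inferInstance
    have hz : ∀ v, g (Φ v) = 0 := fun v => (Submodule.mem_bot k).1
      (hg ▸ Submodule.mem_map_of_mem (LinearMap.mem_range_self Φ v))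
    set c : Fin N → k := fun b => g (fun j => if b = j then 1 else 0) with hc
    have hc0 : ∀ b, c b = 0 := by
      have hsum : ∀ v, (∑ b, c b • e b) v = 0 := by
        intro v
        have h2 : (∑ b, Φ v b • g fun j => if b = j then 1 else 0) = 0 := by
          rw [← LinearMap.pi_apply_eq_sum_univ g (Φ v)]; exact hz v
        rw [LinearMap.sum_apply]
        refine Eq.trans (Finset.sum_congr rfl fun b _ => ?_) h2
        simp only [LinearMap.smul_apply, smul_eq_mul, Φ, LinearMap.pi_apply, c]
        ring
      have : (∑ b, c b • e b) = 0 := LinearMap.ext fun v => hsum v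
      exact Fintype.linearIndependent_iff.mp he c this
    apply hg0
    apply LinearMap.ext
    intro w
    rw [LinearMap.pi_apply_eq_sum_univ g w, LinearMap.zero_apply]
    refine Finset.sum_eq_zero fun b _ => ?_
    rw [show g (fun j => if b = j then 1 else 0) = c b from rfl, hc0 b, smul_zero]
  refine ⟨fun b => (hsurj (fun j => if j = b then 1 else 0)).choose, fun b c' => ?_⟩
  have := (hsurj (fun j => if j = b then 1 else 0)).choose_spec
  calc e c' _ = Φ _ c' := rfl
  _ = if c' = b then 1 else 0 := by rw [this]

end

lemma li_subtype {k : Type} [Field k] {D : Type} [AddCommGroup D] [Module k D] (W : Submodule k D) {n : ℕ}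
    (B : Module.Basis (Fin n) k W) : LinearIndependent k (fun b => (B b : D)) :=
  B.linearIndependent.map' W.subtype (Submodule.ker_subtype W)

theorem auxgen (k : Type) [Field k] : ∀ (N : ℕ) (ι : Type) [Fintype ι] [DecidableEq ι],
    Fintype.card ι = N + 1 → ∀ (z : ι) (V : ι → Type) [∀ i, AddCommGroup (V i)]
    [∀ i, Module k (V i)] (f : Module.Dual k (PiTensorProduct k V)),
    (∀ j : ι, j ≠ z → f ∈ Submodule.span k
      {g : Module.Dual k (PiTensorProduct k V) |
        ∃ (ψ : Module.Dual k (V j))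
          (θ : Module.Dual k (PiTensorProduct k (fun i : {i : ι // i ≠ j} => V i.1))),
          ∀ x : ∀ i, V i, g (PiTensorProduct.tprod k x) =
            ψ (x j) * θ (PiTensorProduct.tprod k (fun i : {i : ι // i ≠ j} => x i.1))}) →
    f ∈ Submodule.span k
      {g : Module.Dual k (PiTensorProduct k V) |
        ∃ φ : ∀ i, Module.Dual k (V i),
          ∀ x : ∀ i, V i, g (PiTensorProduct.tprod k x) = ∏ i, φ i (x i)} := by
  intro N
  induction N with
  | zero =>
    intro ι _ _ hcard z V _ _ f h
    haveI : Subsingleton ι := Fintype.card_le_one_iff_subsingleton.mp (by omega)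
    set x1 : V z → ∀ i, V i := fun v i => cast (congrArg V (Subsingleton.elim z i)) v with hx1def
    have hx1 : ∀ (v : V z) (x : ∀ i, V i), x1 v = Function.update x z v := by
      intro v x
      funext i
      have hi : i = z := Subsingleton.elim i z
      subst hi
      rw [Function.update_self]
      rfl
    have hx1x : ∀ x : ∀ i, V i, x1 (x z) = x := by
      intro x
      funext i
      have hi : i = z := Subsingleton.elim i z
      subst hi
      rfl
    set L : V z →ₗ[k] PiTensorProduct k V :=
      { toFun := fun v => PiTensorProduct.tprod k (x1 v)
        map_add' := by
          intro a b
          rw [hx1 (a + b) (x1 a), hx1 a (x1 a), hx1 b (x1 a), Function.update_idem]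
          exact MultilinearMap.map_update_add (PiTensorProduct.tprod k) (x1 a) z a b
        map_smul' := by
          intro r a
          rw [hx1 (r • a) (x1 a), hx1 a (x1 a), Function.update_idem]
          exact MultilinearMap.map_update_smul (PiTensorProduct.tprod k) (x1 a) z r a }
      with hLdef
    apply Submodule.subset_span
    refine ⟨fun i => cast (congrArg (fun t => Module.Dual k (V t)) (Subsingleton.elim z i))
      (f ∘ₗ L), fun x => ?_⟩
    rw [Fintype.prod_eq_single z (fun i hi => absurd (Subsingleton.elim i z) hi)]
    show f (PiTensorProduct.tprod k x) = f (L (x z))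
    rw [show L (x z) = PiTensorProduct.tprod k (x1 (x z)) from rfl, hx1x x]
  | succ N IH =>
    intro ι _ _ hcard z V instG instM f h
    obtain ⟨z₀, hz₀⟩ := Fintype.exists_ne_of_one_lt_card (by omega) z
    obtain ⟨Nc, cc, gg, hsum⟩ := Submodule.mem_span_set'.mp (h z₀ hz₀)
    choose ψt θt hgt using fun a : Fin Nc => (gg a).2
    set ψ : Fin Nc → Module.Dual k (V z₀) := fun a => cc a • ψt a with hψdef
    have hrep : ∀ x : ∀ i, V i, f (PiTensorProduct.tprod k x)
        = ∑ a, ψ a (x z₀) * θt a (PiTensorProduct.tprod k (resF z₀ x)) := by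
      intro x
      calc f (PiTensorProduct.tprod k x)
          = (∑ a, cc a • ((gg a : Module.Dual k (PiTensorProduct k V)))) (PiTensorProduct.tprod k x) := by
            rw [hsum]
        _ = ∑ a, cc a • (((gg a : Module.Dual k (PiTensorProduct k V))) (PiTensorProduct.tprod k x)) := by
            rw [LinearMap.sum_apply]
            exact Finset.sum_congr rfl fun a _ => LinearMap.smul_apply _ _ _
        _ = ∑ a, ψ a (x z₀) * θt a (PiTensorProduct.tprod k (resF z₀ x)) := by
            refine Finset.sum_congr rfl fun a _ => ?_
            have hga := hgt a x
            rw [hga, smul_eq_mul, ← mul_assoc]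
            rfl
    set W := Submodule.span k (Set.range ψ) with hWdef
    haveI : FiniteDimensional k W := FiniteDimensional.span_of_finite k (Set.finite_range ψ)
    haveI : Module.Free k W := Module.Free.of_divisionRing k W
    set M := Module.finrank k W with hMdef
    set B := Module.finBasis k W with hBdef
    set e : Fin M → Module.Dual k (V z₀) := fun b => (B b : Module.Dual k (V z₀)) with hedef
    have he : LinearIndependent k e :=
      li_subtype W B
    obtain ⟨v, hv⟩ := exists_dual_family he
    set θ' : Fin M → Module.Dual k (PiTensorProduct k (fun i : {i : ι // i ≠ z₀} => V i.1)) :=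
      fun b => restr z₀ (v b) f with hθ'def
    have hmem : ∀ a, ψ a ∈ W := fun a => Submodule.subset_span ⟨a, rfl⟩
    have hψe : ∀ a, ψ a = ∑ b, B.repr ⟨ψ a, hmem a⟩ b • e b := by
      intro a
      calc ψ a = W.subtype ⟨ψ a, hmem a⟩ := rfl
        _ = W.subtype (∑ b, B.repr ⟨ψ a, hmem a⟩ b • B b) := by rw [B.sum_repr]
        _ = ∑ b, B.repr ⟨ψ a, hmem a⟩ b • e b := by
            rw [map_sum]
            exact Finset.sum_congr rfl fun b _ => by rw [map_smul]; rfl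
    have hψv : ∀ a b, ψ a (v b) = B.repr ⟨ψ a, hmem a⟩ b := by
      intro a b
      conv_lhs => rw [hψe a]
      rw [LinearMap.sum_apply]
      have h2 : (∑ b', (B.repr ⟨ψ a, hmem a⟩ b' • e b') (v b)) =
          ∑ b', B.repr ⟨ψ a, hmem a⟩ b' * (if b' = b then 1 else 0) :=
        Finset.sum_congr rfl fun b' _ => by rw [LinearMap.smul_apply, hv b b', smul_eq_mul]
      rw [h2]
      simp only [mul_ite, mul_one, mul_zero]
      rw [Finset.sum_ite_eq' Finset.univ b (fun b' => B.repr ⟨ψ a, hmem a⟩ b')]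
      rw [if_pos (Finset.mem_univ b)]
    have hθ'v : ∀ b (y : ∀ i : {i : ι // i ≠ z₀}, V i.1),
        θ' b (PiTensorProduct.tprod k y) = ∑ a, ψ a (v b) * θt a (PiTensorProduct.tprod k y) := by
      intro b y
      calc θ' b (PiTensorProduct.tprod k y)
          = f (PiTensorProduct.tprod k (glueF z₀ (v b) y)) := restr_tprod z₀ (v b) f y
        _ = ∑ a, ψ a (glueF z₀ (v b) y z₀)
              * θt a (PiTensorProduct.tprod k (resF z₀ (glueF z₀ (v b) y))) :=
            hrep (glueF z₀ (v b) y)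
        _ = ∑ a, ψ a (v b) * θt a (PiTensorProduct.tprod k y) := by
            rw [resF_glueF, glueF_z]
    have hkey : ∀ x : ∀ i, V i, f (PiTensorProduct.tprod k x)
        = ∑ b, e b (x z₀) * θ' b (PiTensorProduct.tprod k (resF z₀ x)) := by
      intro x
      rw [hrep x]
      have h1 : ∀ b, e b (x z₀) * θ' b (PiTensorProduct.tprod k (resF z₀ x))
          = ∑ a, B.repr ⟨ψ a, hmem a⟩ b * e b (x z₀)
              * θt a (PiTensorProduct.tprod k (resF z₀ x)) := by
        intro b
        rw [hθ'v b (resF z₀ x), Finset.mul_sum]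
        exact Finset.sum_congr rfl fun a _ => by rw [hψv a b]; ring
      rw [Finset.sum_congr rfl fun b _ => h1 b, Finset.sum_comm]
      refine Finset.sum_congr rfl fun a _ => ?_
      rw [← Finset.sum_mul]
      congr 1
      conv_lhs => rw [hψe a]
      rw [LinearMap.sum_apply]
      exact Finset.sum_congr rfl fun b _ => by rw [LinearMap.smul_apply, smul_eq_mul]
    have hf : f = ∑ b, extend z₀ (e b) (θ' b) := by
      apply PiTensorProduct.ext
      apply MultilinearMap.ext
      intro x
      simp only [LinearMap.compMultilinearMap_apply, LinearMap.sum_apply]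
      rw [hkey x]
      exact Finset.sum_congr rfl fun b _ => (extend_tprod z₀ (e b) (θ' b) x).symm
    have hcard' : Fintype.card {i : ι // i ≠ z₀} = N + 1 := by
      have h1 : Fintype.card {i : ι // ¬ i = z₀} = Fintype.card ι - Fintype.card {i : ι // i = z₀} :=
        Fintype.card_subtype_compl _
      rw [Fintype.card_subtype_eq] at h1
      have : Fintype.card {i : ι // i ≠ z₀} = Fintype.card {i : ι // ¬ i = z₀} := rfl
      omega
    have hIH : ∀ b, θ' b ∈ Submodule.span k
        {g : Module.Dual k (PiTensorProduct k (fun i : {i : ι // i ≠ z₀} => V i.1)) |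
          ∃ φ : ∀ i' : {i : ι // i ≠ z₀}, Module.Dual k (V i'.1),
            ∀ y : ∀ i' : {i : ι // i ≠ z₀}, V i'.1,
              g (PiTensorProduct.tprod k y) = ∏ i', φ i' (y i')} := by
      intro b
      refine IH {i : ι // i ≠ z₀} hcard' ⟨z, Ne.symm hz₀⟩ (fun i' => V i'.1) (θ' b) ?_
      intro j' hj'
      have hjz : j'.1 ≠ z := fun he => hj' (Subtype.ext he)
      refine span_transfer (restr z₀ (v b)) ?_ (h j'.1 hjz)
      rintro g ⟨ψg, θg, hg⟩
      apply Submodule.subset_span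
      have hz₀j : (⟨z₀, fun he => j'.2 he.symm⟩ : {i : ι // i ≠ j'.1}) = ⟨z₀, fun he => j'.2 he.symm⟩ := rfl
      set zstar : {i : ι // i ≠ j'.1} := ⟨z₀, fun he => j'.2 he.symm⟩ with hzstar
      set Erev : {i'' : {i : ι // i ≠ z₀} // i'' ≠ j'} ≃ {c : {i : ι // i ≠ j'.1} // c ≠ zstar} :=
        { toFun := fun i'' => ⟨⟨i''.1.1, fun he => i''.2 (Subtype.ext he)⟩,
            fun he => i''.1.2 (congrArg Subtype.val he)⟩
          invFun := fun c => ⟨⟨c.1.1, fun he => c.2 (Subtype.ext he)⟩,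
            fun he => c.1.2 (congrArg Subtype.val he)⟩
          left_inv := fun _ => rfl
          right_inv := fun _ => rfl } with hErev
      refine ⟨ψg, θg ∘ₗ glueLM zstar (v b) ∘ₗ (PiTensorProduct.reindex k
        (fun i'' : {i'' : {i : ι // i ≠ z₀} // i'' ≠ j'} => V i''.1.1) Erev).toLinearMap,
        fun y => ?_⟩
      calc restr z₀ (v b) g (PiTensorProduct.tprod k y)
          = g (PiTensorProduct.tprod k (glueF z₀ (v b) y)) := restr_tprod z₀ (v b) g y
        _ = ψg (glueF z₀ (v b) y j'.1)
            * θg (PiTensorProduct.tprod k (resF j'.1 (glueF z₀ (v b) y))) :=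
            hg (glueF z₀ (v b) y)
        _ = ψg (y j') * θg (PiTensorProduct.tprod k (resF j'.1 (glueF z₀ (v b) y))) := by
            rw [glueF_ne z₀ (v b) y j'.1 j'.2]
        _ = _ := by
            have harg : resF j'.1 (glueF z₀ (v b) y)
                = glueF zstar (v b) (fun c => y (Erev.symm c).1) := by
              funext c
              by_cases hc : c = zstar
              · subst hc
                exact (glueF_z z₀ (v b) y).trans
                  (glueF_z (V := fun i : {i : ι // i ≠ j'.1} => V i.1) zstar (v b)
                    (fun c => y (Erev.symm c).1)).symm
              · have hcz : c.1 ≠ z₀ := fun he => hc (Subtype.ext he)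
                exact (glueF_ne z₀ (v b) y c.1 hcz).trans
                  (glueF_ne (V := fun i : {i : ι // i ≠ j'.1} => V i.1) zstar (v b)
                    (fun c => y (Erev.symm c).1) c hc).symm
            rw [LinearMap.comp_apply, LinearMap.comp_apply]
            refine Eq.trans ?_ (congrArg (fun t => ψg (y j') * θg (glueLM zstar (v b) t))
              (PiTensorProduct.reindex_tprod (R := k)
                (s := fun i'' : {i'' : {i : ι // i ≠ z₀} // i'' ≠ j'} => V i''.1.1)
                Erev (fun i => y i.1)).symm)
            exact congrArg (fun t => ψg (y j') * θg t)
              ((congrArg (PiTensorProduct.tprod k) harg).trans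
                (glueLM_tprod (V := fun i : {i : ι // i ≠ j'.1} => V i.1) zstar (v b)
                  (fun c => y (Erev.symm c).1)).symm)
    rw [hf]
    apply Submodule.sum_mem
    intro b _
    refine span_transfer (extend z₀ (e b)) ?_ (hIH b)
    rintro g ⟨φ', hφ'⟩
    apply Submodule.subset_span
    set φφ : ∀ i, Module.Dual k (V i) := fun i => if hiz : i = z₀ then
        cast (congrArg (fun t => Module.Dual k (V t)) hiz.symm) (e b) else φ' ⟨i, hiz⟩ with hφφ
    refine ⟨φφ, fun x => ?_⟩
    rw [extend_tprod, hφ' (resF z₀ x)]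
    rw [← Finset.mul_prod_erase Finset.univ _ (Finset.mem_univ z₀)]
    rw [Finset.prod_subtype (Finset.univ.erase z₀) (p := fun i => i ≠ z₀)
      (fun i => by simp) (fun i => φφ i (x i))]
    congr 1
    · have hdp : φφ z₀ = cast (congrArg (fun t => Module.Dual k (V t))
          (rfl : z₀ = z₀).symm) (e b) := dif_pos rfl
      exact (LinearMap.congr_fun hdp (x z₀)).symm
    · refine Finset.prod_congr rfl fun i' _ => ?_
      have hdn : φφ i'.1 = φ' ⟨i'.1, i'.2⟩ := dif_neg i'.2
      exact (LinearMap.congr_fun hdn (x i'.1)).symm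

/-- If a functional `f` on `V₁ ⊗ ⋯ ⊗ V_{n+1}` lies, for every `k ≤ n`, in the image of the
canonical map `Vₖ* ⊗ (⨂_{i ≠ k} Vᵢ)* → (⨂ᵢ Vᵢ)*` (described as the span of the functionals
determined on pure tensors by `ψ(xₖ)·θ(⨂_{i≠k} xᵢ)`), then `f` lies in the image of the
canonical map `V₁* ⊗ ⋯ ⊗ V_{n+1}* → (⨂ᵢ Vᵢ)*` (the span of the functionals determined on
pure tensors by `∏ᵢ φᵢ(xᵢ)`). -/
theorem statement8 (k : Type) [Field k] (n : ℕ) (hn : 1 ≤ n)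
    (V : Fin (n + 1) → Type) [∀ i, AddCommGroup (V i)] [∀ i, Module k (V i)]
    (f : Module.Dual k (PiTensorProduct k V))
    (h : ∀ j : Fin (n + 1), j.1 < n → f ∈ Submodule.span k
      {g : Module.Dual k (PiTensorProduct k V) |
        ∃ (ψ : Module.Dual k (V j))
          (θ : Module.Dual k (PiTensorProduct k (fun i : {i : Fin (n + 1) // i ≠ j} => V i.1))),
          ∀ x : ∀ i, V i, g (PiTensorProduct.tprod k x) =
            ψ (x j) * θ (PiTensorProduct.tprod k
              (fun i : {i : Fin (n + 1) // i ≠ j} => x i.1))}) :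
    f ∈ Submodule.span k
      {g : Module.Dual k (PiTensorProduct k V) |
        ∃ φ : ∀ i, Module.Dual k (V i),
          ∀ x : ∀ i, V i, g (PiTensorProduct.tprod k x) = ∏ i, φ i (x i)} := by
  refine auxgen k n (Fin (n + 1)) (Fintype.card_fin _) (Fin.last n) V f fun j hj => h j ?_
  have := j.2
  have : j.1 ≠ n := fun he => hj (Fin.ext he)
  omega
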